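/- Let P be a nondisjunctive nested program with no occurrences of 'not'. Then the collection of consistent sets of literals satisfying P is closed under intersection: if X and Y both satisfy P, so does X ∩ Y. -/
import Mathlib


open scoped Classical

inductive Lit where
  | pos : ℕ → Lit
  | neg : ℕ → Lit
deriving DecidableEq

inductive Fml where
  | bot : Fml
  | top : Fml
  | lit : Lit → Fml
  | not : Fml → Fml
  | conj : Fml → Fml → Fml
  | disj : Fml → Fml → Fml
deriving DecidableEq

structure Rule where
  head : Fml
  body : Fml
deriving DecidableEq

abbrev Prog := Set Rule

/-- A set of literals is consistent if it contains no complementary pair. -/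
def Consistent (X : Set Lit) : Prop :=
  ∀ a : ℕ, ¬ (Lit.pos a ∈ X ∧ Lit.neg a ∈ X)

def Sat (X : Set Lit) : Fml → Prop
  | Fml.bot => False
  | Fml.top => True
  | Fml.lit l => l ∈ X
  | Fml.not F => ¬ Sat X F
  | Fml.conj F G => Sat X F ∧ Sat X G
  | Fml.disj F G => Sat X F ∨ Sat X G

def SatRule (X : Set Lit) (r : Rule) : Prop := Sat X r.body → Sat X r.head

def SatProg (X : Set Lit) (P : Prog) : Prop := ∀ r ∈ P, SatRule X r

/-- The reduct of a formula relative to X. -/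
noncomputable def Reduct (X : Set Lit) : Fml → Fml
  | Fml.bot => Fml.bot
  | Fml.top => Fml.top
  | Fml.lit l => Fml.lit l
  | Fml.not F => if Sat X F then Fml.bot else Fml.top
  | Fml.conj F G => Fml.conj (Reduct X F) (Reduct X G)
  | Fml.disj F G => Fml.disj (Reduct X F) (Reduct X G)

noncomputable def ReductRule (X : Set Lit) (r : Rule) : Rule :=
  ⟨Reduct X r.head, Reduct X r.body⟩

noncomputable def ReductProg (X : Set Lit) (P : Prog) : Prog :=
  ReductRule X '' P

/-- Y is an answer set for P: Y is minimal among consistent sets satisfying the reduct of P w.r.t. Y. -/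
def AnswerSet (Y : Set Lit) (P : Prog) : Prop :=
  Consistent Y ∧ SatProg Y (ReductProg Y P) ∧
    ∀ Z : Set Lit, Consistent Z → SatProg Z (ReductProg Y P) → Z ⊆ Y → Z = Y

def SEModel (P : Prog) (X Y : Set Lit) : Prop :=
  Consistent X ∧ Consistent Y ∧ X ⊆ Y ∧ SatProg Y P ∧ SatProg X (ReductProg Y P)

def StrongEq (P Q : Prog) : Prop :=
  ∀ R : Prog, ∀ Y : Set Lit, AnswerSet Y (P ∪ R) ↔ AnswerSet Y (Q ∪ R)

def Fml.negFree : Fml → Prop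
  | Fml.bot => True
  | Fml.top => True
  | Fml.lit l => ∃ a, l = Lit.pos a
  | Fml.not F => F.negFree
  | Fml.conj F G => F.negFree ∧ G.negFree
  | Fml.disj F G => F.negFree ∧ G.negFree

def ProgNegFree (P : Prog) : Prop := ∀ r ∈ P, r.head.negFree ∧ r.body.negFree

/-- The set of atoms (positive literals) in a set of literals. -/
def PosLits (Z : Set Lit) : Set Lit := {l ∈ Z | ∃ a, l = Lit.pos a}

def AtomsOnly (Z : Set Lit) : Prop := ∀ l ∈ Z, ∃ a, l = Lit.pos a

def Fml.elementary (F : Fml) : Prop :=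
  F = Fml.bot ∨ F = Fml.top ∨ ∃ l : Lit, F = Fml.lit l

/-- The head of a nondisjunctive rule: an elementary formula possibly preceded by not. -/
def NdHead (F : Fml) : Prop :=
  F.elementary ∨ ∃ G : Fml, F = Fml.not G ∧ G.elementary

def Nondisjunctive (P : Prog) : Prop := ∀ r ∈ P, NdHead r.head

def Fml.notFree : Fml → Prop
  | Fml.bot => True
  | Fml.top => True
  | Fml.lit _ => True
  | Fml.not _ => False
  | Fml.conj F G => F.notFree ∧ G.notFree
  | Fml.disj F G => F.notFree ∧ G.notFree


lemma sat_mono {X Y : Set Lit} (h : X ⊆ Y) : ∀ F : Fml, F.notFree → Sat X F → Sat Y F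
  | Fml.bot, _, hs => hs
  | Fml.top, _, _ => trivial
  | Fml.lit l, _, hs => h hs
  | Fml.conj F G, hn, hs => ⟨sat_mono h F hn.1 hs.1, sat_mono h G hn.2 hs.2⟩
  | Fml.disj F G, hn, hs =>
      hs.elim (fun hf => Or.inl (sat_mono h F hn.1 hf))
        (fun hg => Or.inr (sat_mono h G hn.2 hg))

/-- for a nondisjunctive program with no occurrences of not, the
consistent sets of literals satisfying it are closed under intersection. -/
theorem stmt9 (P : Prog) (hnd : Nondisjunctive P)
    (hnf : ∀ r ∈ P, r.head.notFree ∧ r.body.notFree)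
    (X Y : Set Lit) (hX : Consistent X) (hY : Consistent Y)
    (hsX : SatProg X P) (hsY : SatProg Y P) :
    SatProg (X ∩ Y) P := by
  intro r hr hb
  have hhX := hsX r hr (sat_mono Set.inter_subset_left r.body (hnf r hr).2 hb)
  have hhY := hsY r hr (sat_mono Set.inter_subset_right r.body (hnf r hr).2 hb)
  rcases hnd r hr with he | ⟨G, hG, _⟩
  · rcases he with h0 | h0 | ⟨l, h0⟩ <;> rw [h0] at hhX hhY ⊢
    · exact hhX.elim
    · trivial
    · exact ⟨hhX, hhY⟩
  · exact absurd (hnf r hr).1 (by rw [hG]; exact id)
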